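/- For the Markov-measure representation of the Cuntz algebra on L²(μ), the closed subspace M of L²(μ) consisting of functions depending only on the first coordinate is invariant under all adjoints S_i*: explicitly, for f ∈ M, (S_j* f)(x₁x₂…) = √(λ_j T_{j,x₁}/λ_{x₁}) · f(j x₁ x₂…), which again depends only on the first coordinate. -/

import Mathlib

open MeasureTheory ENNReal

noncomputable section

abbrev Word (N : ℕ) := ℕ → Fin N

/-- The left shift `σ` deleting the first letter. -/
def shift {N : ℕ} (ω : Word N) : Word N := fun n => ω (n + 1)

/-- The map `σ_i` prepending the letter `i`. -/
def prepend {N : ℕ} (i : Fin N) (ω : Word N) : Word N :=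
  fun n => match n with
  | 0 => i
  | n + 1 => ω n

/-- The cylinder set determined by a finite word. -/
def cyl {N : ℕ} (w : List (Fin N)) : Set (Word N) :=
  {ω | ∀ k : Fin w.length, ω k = w.get k}

/-- The Markov weight of a chain starting at `i`. -/
def chainProd {N : ℕ} (T : Fin N → Fin N → ℝ) : Fin N → List (Fin N) → ℝ
  | _, [] => 1
  | i, j :: rest => T i j * chainProd T j rest

/-- The Markov measure of the cylinder determined by a finite word:
`μ(C(i₁…iₙ)) = λ_{i₁} T_{i₁,i₂}⋯T_{i_{n-1},i_n}`. -/
def markovCyl {N : ℕ} (lam : Fin N → ℝ) (T : Fin N → Fin N → ℝ) : List (Fin N) → ℝ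
  | [] => 1
  | i :: rest => lam i * chainProd T i rest

open Set Filter
open scoped NNReal

lemma mem_cyl_ofFn {N m : ℕ} (v : Fin m → Fin N) (ω : Word N) :
    ω ∈ cyl (List.ofFn v) ↔ ∀ k : Fin m, ω k = v k := by
  constructor
  · intro h k
    have := h (Fin.cast (List.length_ofFn (f := v)).symm k)
    rw [List.get_ofFn] at this
    simpa using this
  · intro h k
    rw [List.get_ofFn]
    simpa using h (Fin.cast (List.length_ofFn (f := v)) k)

lemma eval_singleton_eq_union {N : ℕ} (n : ℕ) (i : Fin N) :
    {ω : Word N | ω n = i} =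
      ⋃ v : {v : Fin (n + 1) → Fin N // v (Fin.last n) = i}, cyl (List.ofFn v.1) := by
  ext ω
  simp only [Set.mem_setOf_eq, Set.mem_iUnion, mem_cyl_ofFn]
  constructor
  · intro h
    exact ⟨⟨fun k => ω k, by simpa using h⟩, fun k => rfl⟩
  · rintro ⟨⟨v, hv⟩, hω⟩
    have := hω (Fin.last n)
    simpa [hv] using this

lemma measurableSet_cyl {N : ℕ} (w : List (Fin N)) : MeasurableSet (cyl w) := by
  have : cyl w = ⋂ k : Fin w.length, (fun ω : Word N => ω k) ⁻¹' {w.get k} := by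
    ext ω; simp [cyl, Set.mem_iInter]
  rw [this]
  exact MeasurableSet.iInter fun k => measurable_pi_apply (k : ℕ) (measurableSet_singleton _)

lemma generateFrom_cyl (N : ℕ) :
    (inferInstance : MeasurableSpace (Word N)) =
      MeasurableSpace.generateFrom (Set.range (cyl (N := N))) := by
  refine le_antisymm ?_ (MeasurableSpace.generateFrom_le ?_)
  · show (MeasurableSpace.pi : MeasurableSpace (Word N)) ≤ _
    rw [MeasurableSpace.pi]
    refine iSup_le fun n => ?_
    rw [MeasurableSpace.comap_le_iff_le_map]
    intro t _
    have hsingle : ∀ i : Fin N,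
        MeasurableSet[MeasurableSpace.generateFrom (Set.range (cyl (N := N)))]
          {ω : Word N | ω n = i} := by
      intro i
      rw [eval_singleton_eq_union]
      exact MeasurableSet.iUnion fun v =>
        MeasurableSpace.measurableSet_generateFrom ⟨List.ofFn v.1, rfl⟩
    have ht : (fun ω : Word N => ω n) ⁻¹' t = ⋃ i ∈ t, {ω : Word N | ω n = i} := by
      ext ω; simp
    show MeasurableSet[MeasurableSpace.generateFrom (Set.range (cyl (N := N)))]
      ((fun ω : Word N => ω n) ⁻¹' t)
    rw [ht]
    exact MeasurableSet.biUnion t.to_countable fun i _ => hsingle i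
  · rintro s ⟨w, rfl⟩
    exact measurableSet_cyl w

lemma cyl_subset_of_le {N : ℕ} {w w' : List (Fin N)} (h : w.length ≤ w'.length)
    (hne : (cyl w ∩ cyl w').Nonempty) : cyl w' ⊆ cyl w := by
  obtain ⟨ω, hω, hω'⟩ := hne
  intro η hη k
  have h1 : (k : ℕ) < w'.length := lt_of_lt_of_le k.isLt h
  exact (hη ⟨k, h1⟩).trans ((hω' ⟨k, h1⟩).symm.trans (hω k))

lemma isPiSystem_cyl (N : ℕ) : IsPiSystem (Set.range (cyl (N := N))) := by
  rintro s ⟨w, rfl⟩ t ⟨w', rfl⟩ hne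
  rcases le_total w.length w'.length with h | h
  · exact ⟨w', (Set.inter_eq_right.mpr (cyl_subset_of_le h hne)).symm⟩
  · refine ⟨w, ?_⟩
    rw [Set.inter_comm] at hne ⊢
    exact (Set.inter_eq_right.mpr (cyl_subset_of_le h hne)).symm

lemma cyl_cons {N : ℕ} (j : Fin N) (w : List (Fin N)) :
    cyl (j :: w) = cyl [j] ∩ (fun ω => fun n => ω (n+1)) ⁻¹' cyl w := by
  ext ω
  constructor
  · intro h
    constructor
    · intro k
      have hk : k = ⟨0, Nat.one_pos⟩ := Fin.ext (Nat.lt_one_iff.mp k.isLt)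
      subst hk
      simpa using h ⟨0, Nat.succ_pos _⟩
    · intro k
      exact h k.succ
  · rintro ⟨h0, hs⟩ k
    induction k using Fin.cases with
    | zero => simpa using h0 ⟨0, Nat.one_pos⟩
    | succ k => exact hs k


lemma measurable_shift {N : ℕ} : Measurable (shift (N := N)) :=
  measurable_pi_lambda _ fun n => measurable_pi_apply (n + 1)



lemma mem_cyl_singleton {N : ℕ} (i : Fin N) (ω : Word N) : ω ∈ cyl [i] ↔ ω 0 = i := by
  simp [cyl, Fin.forall_fin_one]

lemma cyl_nil {N : ℕ} : cyl ([] : List (Fin N)) = Set.univ := by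
  ext ω; simp [cyl]

lemma map_shift_restrict {N : ℕ} (lam : Fin N → ℝ) (T : Fin N → Fin N → ℝ)
    (hlam_pos : ∀ i, 0 < lam i) (hT_pos : ∀ i j, 0 < T i j) (hrow : ∀ i, ∑ j, T i j = 1)
    (μ : Measure (Word N)) [IsProbabilityMeasure μ]
    (hμ : ∀ w : List (Fin N), μ (cyl w) = ENNReal.ofReal (markovCyl lam T w)) (j : Fin N) :
    (μ.restrict (cyl [j])).map shift =
      μ.withDensity (fun y => ENNReal.ofReal (lam j * T j (y 0) / lam (y 0))) := by
  have hcylcons : ∀ (a : Fin N) (w : List (Fin N)),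
      cyl (a :: w) = cyl [a] ∩ shift ⁻¹' cyl w := fun a w => cyl_cons a w
  have hmap : ∀ w : List (Fin N),
      ((μ.restrict (cyl [j])).map shift) (cyl w) =
        ENNReal.ofReal (lam j * chainProd T j w) := by
    intro w
    rw [Measure.map_apply measurable_shift (measurableSet_cyl w),
      Measure.restrict_apply (measurable_shift (measurableSet_cyl w)),
      Set.inter_comm, ← hcylcons, hμ]
    rfl
  have hwd : ∀ w : List (Fin N),
      (μ.withDensity (fun y => ENNReal.ofReal (lam j * T j (y 0) / lam (y 0)))) (cyl w) =
        ENNReal.ofReal (lam j * chainProd T j w) := by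
    intro w
    rw [withDensity_apply _ (measurableSet_cyl w)]
    cases w with
    | nil =>
      rw [cyl_nil, Measure.restrict_univ]
      have hmapint : ∫⁻ y, ENNReal.ofReal (lam j * T j (y 0) / lam (y 0)) ∂μ
          = ∫⁻ i, ENNReal.ofReal (lam j * T j i / lam i)
              ∂(μ.map (fun ω : Word N => ω 0)) :=
        (lintegral_map (f := fun i : Fin N => ENNReal.ofReal (lam j * T j i / lam i))
          (measurable_of_finite _) (measurable_pi_apply 0)).symm
      rw [hmapint, lintegral_fintype]
      have hpt : ∀ i : Fin N, (μ.map (fun ω : Word N => ω 0)) {i}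
          = ENNReal.ofReal (lam i) := by
        intro i
        rw [Measure.map_apply (measurable_pi_apply 0) (measurableSet_singleton i)]
        have hset : (fun ω : Word N => ω 0) ⁻¹' {i} = cyl [i] := by
          ext ω; simp [mem_cyl_singleton]
        rw [hset, hμ]
        simp [markovCyl, chainProd]
      have hterm : ∀ i : Fin N,
          ENNReal.ofReal (lam j * T j i / lam i) * (μ.map (fun ω : Word N => ω 0)) {i}
            = ENNReal.ofReal (lam j * T j i) := by
        intro i
        rw [hpt i, ← ENNReal.ofReal_mul
          (le_of_lt (div_pos (mul_pos (hlam_pos j) (hT_pos j i)) (hlam_pos i)))]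
        exact congrArg ENNReal.ofReal (div_mul_cancel₀ _ (hlam_pos i).ne')
      rw [Finset.sum_congr rfl fun i _ => hterm i,
        ← ENNReal.ofReal_sum_of_nonneg
          (fun i _ => le_of_lt (mul_pos (hlam_pos j) (hT_pos j i))),
        ← Finset.mul_sum, hrow]
      simp [chainProd]
    | cons a rest =>
      have hconst : ∫⁻ y in cyl (a :: rest),
            ENNReal.ofReal (lam j * T j (y 0) / lam (y 0)) ∂μ
          = ∫⁻ _ in cyl (a :: rest), ENNReal.ofReal (lam j * T j a / lam a) ∂μ :=
        setLIntegral_congr_fun (measurableSet_cyl _) (fun y hy => by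
          have h0 : y 0 = a := by simpa using hy ⟨0, Nat.succ_pos _⟩
          rw [h0])
      rw [hconst, setLIntegral_const, hμ,
        ← ENNReal.ofReal_mul
          (le_of_lt (div_pos (mul_pos (hlam_pos j) (hT_pos j a)) (hlam_pos a)))]
      congr 1
      show lam j * T j a / lam a * markovCyl lam T (a :: rest)
          = lam j * chainProd T j (a :: rest)
      have ha := (hlam_pos a).ne'
      simp only [markovCyl, chainProd]
      field_simp
  haveI hfin : IsFiniteMeasure ((μ.restrict (cyl [j])).map shift) := by
    constructor
    rw [← cyl_nil, hmap]
    exact ofReal_lt_top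
  refine ext_of_generate_finite _ (generateFrom_cyl N) (isPiSystem_cyl N) ?_ ?_
  · rintro s ⟨w, rfl⟩
    rw [hmap, hwd]
  · rw [← cyl_nil (N := N), hmap, hwd]

theorem markov_adjoint_preserves_first_coordinate_functions {N : ℕ} (hN : 2 ≤ N)
    (lam : Fin N → ℝ) (T : Fin N → Fin N → ℝ)
    (hlam_pos : ∀ i, 0 < lam i) (hT_pos : ∀ i j, 0 < T i j)
    (hrow : ∀ i, ∑ j, T i j = 1) (hstat : ∀ j, ∑ i, lam i * T i j = lam j)
    (μ : Measure (Word N)) [IsProbabilityMeasure μ]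
    (hμ : ∀ w : List (Fin N), μ (cyl w) = ENNReal.ofReal (markovCyl lam T w))
    (f : Fin N → Word N → ℂ)
    (hf : ∀ j x, f j x = if x 0 = j
      then (Real.sqrt (lam (x 1) / (lam j * T j (x 1))) : ℂ) else 0)
    (S : Fin N → (Lp ℂ 2 μ →L[ℂ] Lp ℂ 2 μ))
    (hS : ∀ j (g : Lp ℂ 2 μ), ⇑(S j g) =ᵐ[μ] fun x => f j x * g (shift x)) :
    ∀ (j : Fin N) (g : Lp ℂ 2 μ) (F : Fin N → ℂ),
      (⇑g =ᵐ[μ] fun x => F (x 0)) →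
      ⇑(ContinuousLinearMap.adjoint (S j) g) =ᵐ[μ]
        fun x => (Real.sqrt (lam j * T j (x 0) / lam (x 0)) : ℂ) * F j := by
  intro j g F hg
  classical
  have hmeas := map_shift_restrict lam T hlam_pos hT_pos hrow μ hμ j
  set ρ : Word N → ℝ≥0 := fun y => Real.toNNReal (lam j * T j (y 0) / lam (y 0)) with hρdef
  have hρmeas : Measurable ρ :=
    (measurable_of_finite (fun i : Fin N => Real.toNNReal (lam j * T j i / lam i))).comp
      (measurable_pi_apply 0)
  have hρcoe : (fun y : Word N => ((ρ y : ℝ≥0) : ℝ≥0∞)) =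
      fun y => ENNReal.ofReal (lam j * T j (y 0) / lam (y 0)) := rfl
  set h : Word N → ℂ :=
    (fun x => (Real.sqrt (lam j * T j (x 0) / lam (x 0)) : ℂ) * F j) with hhdef
  have hhmeas : AEStronglyMeasurable h μ :=
    ((measurable_of_finite
        (fun i : Fin N => ((Real.sqrt (lam j * T j i / lam i) : ℝ) : ℂ) * F j)).comp
      (measurable_pi_apply 0)).aestronglyMeasurable
  have hbound : ∀ x, ‖h x‖ ≤
      ∑ i, ‖((Real.sqrt (lam j * T j i / lam i) : ℝ) : ℂ) * F j‖ := fun x =>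
    Finset.single_le_sum
      (f := fun i => ‖((Real.sqrt (lam j * T j i / lam i) : ℝ) : ℂ) * F j‖)
      (fun i _ => norm_nonneg _) (Finset.mem_univ (x 0))
  have hmem : MemLp h 2 μ :=
    (memLp_top_of_bound hhmeas _ (Filter.Eventually.of_forall hbound)).mono_exponent
      le_top
  suffices hEq : ContinuousLinearMap.adjoint (S j) g = hmem.toLp h by
    rw [hEq]
    exact hmem.coeFn_toLp
  apply ext_inner_right ℂ
  intro u
  rw [ContinuousLinearMap.adjoint_inner_left, L2.inner_def, L2.inner_def]
  set ψ : Word N → ℂ := fun y =>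
    ((starRingEnd ℂ) (F j) * ((Real.sqrt (lam (y 0) / (lam j * T j (y 0))) : ℝ) : ℂ)) * u y
    with hψdef
  have hψm : AEStronglyMeasurable ψ μ :=
    ((aestronglyMeasurable_const.mul
        ((measurable_of_finite
            (fun i : Fin N => ((Real.sqrt (lam i / (lam j * T j i)) : ℝ) : ℂ))).comp
          (measurable_pi_apply 0)).aestronglyMeasurable).mul (Lp.aestronglyMeasurable u))
  have hL : (fun a => (inner ℂ (g a) ((S j u) a) : ℂ)) =ᵐ[μ]
      (cyl [j]).indicator (fun x => ψ (shift x)) := by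
    filter_upwards [hg, hS j u] with a h1 h2
    rw [RCLike.inner_apply', h1, h2, hf j a]
    by_cases ha : a 0 = j
    · rw [Set.indicator_of_mem ((mem_cyl_singleton j a).mpr ha)]
      simp only [hψdef, shift, ha, if_pos, zero_add]
      ring
    · rw [Set.indicator_of_notMem (fun hc => ha ((mem_cyl_singleton j a).mp hc)), if_neg ha]
      simp
  have hR : (fun a => (inner ℂ ((hmem.toLp h) a) (u a) : ℂ)) =ᵐ[μ] fun a => ρ a • ψ a := by
    filter_upwards [hmem.coeFn_toLp] with a h1
    rw [RCLike.inner_apply', h1]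
    have ha0 := hlam_pos (a 0)
    have hb0 := mul_pos (hlam_pos j) (hT_pos j (a 0))
    have hnn : (0:ℝ) ≤ lam j * T j (a 0) / lam (a 0) := le_of_lt (div_pos hb0 ha0)
    have key : Real.sqrt (lam j * T j (a 0) / lam (a 0)) =
        (lam j * T j (a 0) / lam (a 0)) * Real.sqrt (lam (a 0) / (lam j * T j (a 0))) := by
      have h2 : (lam j * T j (a 0) / lam (a 0)) ^ 2 * (lam (a 0) / (lam j * T j (a 0)))
          = lam j * T j (a 0) / lam (a 0) := by
        field_simp
      calc Real.sqrt (lam j * T j (a 0) / lam (a 0))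
          = Real.sqrt ((lam j * T j (a 0) / lam (a 0)) ^ 2
              * (lam (a 0) / (lam j * T j (a 0)))) := by rw [h2]
        _ = Real.sqrt ((lam j * T j (a 0) / lam (a 0)) ^ 2)
              * Real.sqrt (lam (a 0) / (lam j * T j (a 0))) :=
            Real.sqrt_mul (by positivity) _
        _ = (lam j * T j (a 0) / lam (a 0))
              * Real.sqrt (lam (a 0) / (lam j * T j (a 0))) := by
            rw [Real.sqrt_sq hnn]
    simp only [hhdef, hψdef, NNReal.smul_def, Complex.real_smul, hρdef]
    rw [Real.coe_toNNReal _ hnn, map_mul, Complex.conj_ofReal, key, Complex.ofReal_mul]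
    ring
  rw [integral_congr_ae hL, integral_congr_ae hR,
    integral_indicator (measurableSet_cyl [j])]
  have hψm' : AEStronglyMeasurable ψ ((μ.restrict (cyl [j])).map shift) := by
    rw [hmeas]
    exact hψm.mono_ac (withDensity_absolutelyContinuous μ _)
  rw [← integral_map measurable_shift.aemeasurable hψm', hmeas, ← hρcoe,
    integral_withDensity_eq_integral_smul hρmeas]
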